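/- Let G = F_{s1} × F_{s2} be the direct product of two free groups with s1 ≥ 2 and s2 ≥ 2, and let X be the standard generating set consisting of the free generators of the two factors embedded in the product. Then the number b_8 of bad valid strings of length 8 over X satisfies b_8 ≥ 2 s1 (s1 − 1) s2 (s2 − 1); more precisely, the strings of kernel form (x_1, x_2, y_1, y_2, x_2, x_1, y_2, y_1) with x_1 ≠ x_2 generators of the first factor and y_1 ≠ y_2 generators of the second factor, together with the strings of the analogous form with the roles of the two factors interchanged, are pairwise distinct bad valid strings of length 8, and there are exactly 2 s1 (s1 − 1) s2 (s2 − 1) of them. -/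
import Mathlib


/-- The alternating product `x_1⁻¹ x_2 x_3⁻¹ x_4 ⋯ x_{2n-1}⁻¹ x_{2n}` associated to a
string `(x_1, …, x_{2n})` of group elements. -/
def altProd {G : Type*} [Group G] {n : ℕ} (x : Fin (2 * n) → G) : G :=
  (List.ofFn fun i : Fin n =>
    (x ⟨2 * i.val, by have := i.isLt; omega⟩)⁻¹ *
      x ⟨2 * i.val + 1, by have := i.isLt; omega⟩).prod

lemma altProd_four {G : Type*} [Group G] (x : Fin (2 * 4) → G) :
    altProd x = (x 0)⁻¹ * x 1 * ((x 2)⁻¹ * x 3) * ((x 4)⁻¹ * x 5) * ((x 6)⁻¹ * x 7) := by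
  unfold altProd
  rw [List.ofFn_succ, List.ofFn_succ, List.ofFn_succ, List.ofFn_succ, List.ofFn_zero]
  simp [mul_assoc]

lemma alg_helper {G : Type*} [Group G] {u v w z : G} (h : Commute (v⁻¹ * u) (w⁻¹ * z)) :
    u⁻¹ * v * (w⁻¹ * z) * (v⁻¹ * u) * (z⁻¹ * w) = 1 := by
  rw [mul_assoc (u⁻¹ * v) (w⁻¹ * z) (v⁻¹ * u), ← h.eq]
  group

lemma card_ne_pairs (n : ℕ) : Nat.card {p : Fin n × Fin n // p.1 ≠ p.2} = n * (n - 1) := by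
  have e : {p : Fin n × Fin n // p.1 = p.2} ≃ Fin n :=
    { toFun := fun p => p.1.1
      invFun := fun a => ⟨(a, a), rfl⟩
      left_inv := by rintro ⟨⟨a, b⟩, h⟩; cases h; rfl
      right_inv := fun a => rfl }
  rw [Nat.card_eq_fintype_card,
    Fintype.card_subtype_compl (p := fun p : Fin n × Fin n => p.1 = p.2)]
  rw [Fintype.card_congr e]
  simp [Nat.mul_sub]

def strA {s1 s2 : ℕ} (a1 a2 : Fin s1) (b1 b2 : Fin s2) :
    Fin (2 * 4) → FreeGroup (Fin s1) × FreeGroup (Fin s2) :=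
  ![(FreeGroup.of a1, 1), (FreeGroup.of a2, 1), (1, FreeGroup.of b1), (1, FreeGroup.of b2),
    (FreeGroup.of a2, 1), (FreeGroup.of a1, 1), (1, FreeGroup.of b2), (1, FreeGroup.of b1)]

def strB {s1 s2 : ℕ} (a1 a2 : Fin s1) (b1 b2 : Fin s2) :
    Fin (2 * 4) → FreeGroup (Fin s1) × FreeGroup (Fin s2) :=
  ![(1, FreeGroup.of b1), (1, FreeGroup.of b2), (FreeGroup.of a1, 1), (FreeGroup.of a2, 1),
    (1, FreeGroup.of b2), (1, FreeGroup.of b1), (FreeGroup.of a2, 1), (FreeGroup.of a1, 1)]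

def strF {s1 s2 : ℕ} (x : Bool × (Fin s1 × Fin s1) × (Fin s2 × Fin s2)) :
    Fin (2 * 4) → FreeGroup (Fin s1) × FreeGroup (Fin s2) :=
  if x.1 then strB x.2.1.1 x.2.1.2 x.2.2.1 x.2.2.2 else strA x.2.1.1 x.2.1.2 x.2.2.1 x.2.2.2

lemma strF_injective (s1 s2 : ℕ) :
    Function.Injective (strF (s1 := s1) (s2 := s2)) := by
  rintro ⟨c, ⟨a1, a2⟩, ⟨b1, b2⟩⟩ ⟨c', ⟨a1', a2'⟩, ⟨b1', b2'⟩⟩ h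
  rw [funext_iff] at h
  have h0 := h 0; have h1 := h 1; have h2 := h 2; have h3 := h 3
  cases c <;> cases c' <;>
    simp [strF, strA, strB, Prod.ext_iff, FreeGroup.of_injective.eq_iff,
      FreeGroup.of_ne_one] at h0 h1 h2 h3 ⊢ <;>
    first | exact ⟨⟨h0, h1⟩, h2, h3⟩ | exact ⟨⟨h2, h3⟩, h0, h1⟩

/-- Let `G = F_{s1} × F_{s2}` with `s1, s2 ≥ 2` and `X` the standard
generating set.  The strings of kernel form `(a1, a2, b1, b2, a2, a1, b2, b1)` with
`a1 ≠ a2` generators of the first factor and `b1 ≠ b2` generators of the second, and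
the analogous strings with the roles of the two factors interchanged, are pairwise
distinct bad valid strings of length 8; there are exactly `2 s1 (s1-1) s2 (s2-1)` of
them, and consequently `b_8 ≥ 2 s1 (s1-1) s2 (s2-1)`. -/
theorem product_bad_strings_length_eight (s1 s2 : ℕ) (h1 : 2 ≤ s1) (h2 : 2 ≤ s2) :
    let G := FreeGroup (Fin s1) × FreeGroup (Fin s2)
    let ea : Fin s1 → G := fun a => (FreeGroup.of a, 1)
    let eb : Fin s2 → G := fun b => (1, FreeGroup.of b)
    let X : Set G := Set.range ea ∪ Set.range eb
    let T : Set (Fin (2 * 4) → G) :=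
      {S | (∃ a1 a2 b1 b2, a1 ≠ a2 ∧ b1 ≠ b2 ∧
              S = ![ea a1, ea a2, eb b1, eb b2, ea a2, ea a1, eb b2, eb b1]) ∨
           (∃ b1 b2 a1 a2, b1 ≠ b2 ∧ a1 ≠ a2 ∧
              S = ![eb b1, eb b2, ea a1, ea a2, eb b2, eb b1, ea a2, ea a1])}
    (∀ S ∈ T, (∀ i, S i ∈ X) ∧
      (∀ (i : ℕ) (h : i + 1 < 2 * 4), S ⟨i, by omega⟩ ≠ S ⟨i + 1, h⟩) ∧
      altProd S = 1) ∧
    Nat.card T = 2 * s1 * (s1 - 1) * s2 * (s2 - 1) ∧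
    2 * s1 * (s1 - 1) * s2 * (s2 - 1) ≤
      Nat.card {S : Fin (2 * 4) → G // (∀ i, S i ∈ X) ∧
        (∀ (i : ℕ) (h : i + 1 < 2 * 4), S ⟨i, by omega⟩ ≠ S ⟨i + 1, h⟩) ∧
        altProd S = 1} := by
  intro G ea eb X T
  have hea : Function.Injective ea := fun a b h =>
    FreeGroup.of_injective (congrArg Prod.fst h)
  have heb : Function.Injective eb := fun a b h =>
    FreeGroup.of_injective (congrArg Prod.snd h)
  have hab : ∀ (a : Fin s1) (b : Fin s2), ea a ≠ eb b := fun a b h =>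
    FreeGroup.of_ne_one a (congrArg Prod.fst h)
  have hc : ∀ (a : Fin s1) (b : Fin s2), Commute (ea a) (eb b) := by
    intro a b
    show ea a * eb b = eb b * ea a
    show ((FreeGroup.of a, 1) : G) * ((1 : FreeGroup (Fin s1)), FreeGroup.of b)
        = ((1 : FreeGroup (Fin s1)), FreeGroup.of b) * ((FreeGroup.of a, 1) : G)
    simp [Prod.ext_iff]
  -- Part 1
  have hmem : ∀ S ∈ T, (∀ i, S i ∈ X) ∧
      (∀ (i : ℕ) (h : i + 1 < 2 * 4), S ⟨i, by omega⟩ ≠ S ⟨i + 1, h⟩) ∧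
      altProd S = 1 := by
    rintro S (⟨a1, a2, b1, b2, hne1, hne2, rfl⟩ | ⟨b1, b2, a1, a2, hne2, hne1, rfl⟩)
    · refine ⟨?_, ?_, ?_⟩
      · intro i
        fin_cases i <;>
          first
          | exact Or.inl ⟨a1, rfl⟩ | exact Or.inl ⟨a2, rfl⟩
          | exact Or.inr ⟨b1, rfl⟩ | exact Or.inr ⟨b2, rfl⟩
      · intro i h
        have h7 : i ≤ 6 := by omega
        interval_cases i
        · exact hea.ne hne1
        · exact hab a2 b1
        · exact heb.ne hne2
        · exact fun hh => hab a2 b2 hh.symm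
        · exact hea.ne hne1.symm
        · exact hab a1 b2
        · exact heb.ne hne2.symm
      · rw [altProd_four]
        have hA : ∀ b, Commute ((ea a2)⁻¹ * ea a1) (eb b) :=
          fun b => ((hc a2 b).inv_left).mul_left (hc a1 b)
        exact alg_helper (((hA b1).inv_right).mul_right (hA b2))
    · refine ⟨?_, ?_, ?_⟩
      · intro i
        fin_cases i <;>
          first
          | exact Or.inl ⟨a1, rfl⟩ | exact Or.inl ⟨a2, rfl⟩
          | exact Or.inr ⟨b1, rfl⟩ | exact Or.inr ⟨b2, rfl⟩
      · intro i h
        have h7 : i ≤ 6 := by omega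
        interval_cases i
        · exact heb.ne hne2
        · exact fun hh => hab a1 b2 hh.symm
        · exact hea.ne hne1
        · exact hab a2 b2
        · exact heb.ne hne2.symm
        · exact fun hh => hab a2 b1 hh.symm
        · exact hea.ne hne1.symm
      · rw [altProd_four]
        have hA : ∀ a, Commute ((eb b2)⁻¹ * eb b1) (ea a) :=
          fun a => ((hc a b2).symm.inv_left).mul_left (hc a b1).symm
        exact alg_helper (((hA a1).inv_right).mul_right (hA a2))
  -- the parameter set
  set A : Set (Fin s1 × Fin s1) := {p | p.1 ≠ p.2} with hA
  set B : Set (Fin s2 × Fin s2) := {q | q.1 ≠ q.2} with hB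
  set D : Set (Bool × (Fin s1 × Fin s1) × (Fin s2 × Fin s2)) :=
    (Set.univ : Set Bool) ×ˢ (A ×ˢ B) with hD
  have hTD : T = strF '' D := by
    ext S
    constructor
    · rintro (⟨a1, a2, b1, b2, hne1, hne2, rfl⟩ | ⟨b1, b2, a1, a2, hne2, hne1, rfl⟩)
      · exact ⟨(false, (a1, a2), (b1, b2)), ⟨trivial, hne1, hne2⟩, rfl⟩
      · exact ⟨(true, (a1, a2), (b1, b2)), ⟨trivial, hne1, hne2⟩, rfl⟩
    · rintro ⟨⟨c, ⟨a1, a2⟩, ⟨b1, b2⟩⟩, ⟨-, hne1, hne2⟩, rfl⟩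
      cases c
      · exact Or.inl ⟨a1, a2, b1, b2, hne1, hne2, rfl⟩
      · exact Or.inr ⟨b1, b2, a1, a2, hne2, hne1, rfl⟩
  have hcardT : Nat.card T = 2 * s1 * (s1 - 1) * s2 * (s2 - 1) := by
    rw [hTD, Nat.card_image_of_injective (strF_injective s1 s2)]
    rw [hD]
    rw [Nat.card_congr ((Equiv.Set.prod _ _).trans
      ((Equiv.Set.univ Bool).prodCongr (Equiv.Set.prod A B)))]
    rw [Nat.card_prod, Nat.card_prod]
    have hAcard : Nat.card A = s1 * (s1 - 1) := card_ne_pairs s1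
    have hBcard : Nat.card B = s2 * (s2 - 1) := card_ne_pairs s2
    rw [hAcard, hBcard]
    simp [Nat.card_eq_fintype_card]
    ring
  refine ⟨hmem, hcardT, ?_⟩
  -- Part 3
  have hXfin : X.Finite := (Set.finite_range ea).union (Set.finite_range eb)
  have hBigfin : {S : Fin (2 * 4) → G | (∀ i, S i ∈ X) ∧
      (∀ (i : ℕ) (h : i + 1 < 2 * 4), S ⟨i, by omega⟩ ≠ S ⟨i + 1, h⟩) ∧
      altProd S = 1}.Finite := by
    refine Set.Finite.subset (Set.Finite.pi (fun _ : Fin (2 * 4) => hXfin)) ?_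
    intro S hS
    exact Set.mem_univ_pi.mpr hS.1
  have hle : Nat.card T ≤ Nat.card {S : Fin (2 * 4) → G | (∀ i, S i ∈ X) ∧
      (∀ (i : ℕ) (h : i + 1 < 2 * 4), S ⟨i, by omega⟩ ≠ S ⟨i + 1, h⟩) ∧
      altProd S = 1} := Nat.card_mono hBigfin (fun S hS => hmem S hS)
  rw [hcardT] at hle
  exact hle
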